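/- arXiv:0907.2639 — 2 statements merged into one kernel-verified Lean document; each statement's English description precedes it below -/
import Mathlib

section
/- Suppose m ≤ n, M > (d₂ (n−m) ‖w_2 − ℓ_2‖)^{n/m} with d₂ = 12, n ≥ 5, and χ_{m,n}(M) ≥ 1/2. Then for all but at most a fraction 1/2^n of m×n integer matrices A with entries in {1,...,M} and linearly independent rows, the shortest nonzero vector of L_N(A) = { x ∈ Z^n : Ax = 0 } has norm greater than γ_{n−m} ‖w_2 − ℓ_2‖, where γ_j = max{C_1,...,C_j} and C_i is Hermite's constant. -/
/-- The Gram-Schmidt orthogonalization of a finite family of vectors. -/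
noncomputable def gsE {E : Type*} [NormedAddCommGroup E] [InnerProductSpace ℝ E] {r : ℕ}
    (c : Fin r → E) : Fin r → E :=
  haveI : WellFoundedLT (Fin r) := inferInstance
  InnerProductSpace.gramSchmidt ℝ c

/-- The lattice generated by a family of vectors: all integer combinations. -/
noncomputable def latE {E : Type*} [NormedAddCommGroup E] [InnerProductSpace ℝ E] {r : ℕ}
    (c : Fin r → E) : AddSubgroup E :=
  AddSubgroup.closure (Set.range c)

/-- The length of a shortest nonzero vector of the lattice generated by `c`. -/
noncomputable def lambda1 {E : Type*} [NormedAddCommGroup E] [InnerProductSpace ℝ E] {r : ℕ}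
    (c : Fin r → E) : ℝ :=
  sInf { t | ∃ v ∈ latE c, v ≠ 0 ∧ ‖v‖ = t }

/-- The determinant of the lattice with basis `c` : the square root of the
Gram determinant of `c`. -/
noncomputable def latDet {E : Type*} [NormedAddCommGroup E] [InnerProductSpace ℝ E] {r : ℕ}
    (c : Fin r → E) : ℝ :=
  Real.sqrt (Matrix.det (Matrix.of fun i j : Fin r => (inner ℝ (c i) (c j) : ℝ)))

/-- Hermite's constant of rank `j`. -/
noncomputable def hermiteC (j : ℕ) : ℝ :=
  sSup { t | ∃ c : Fin j → EuclideanSpace ℝ (Fin j), LinearIndependent ℝ c ∧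
    t = lambda1 c ^ 2 / latDet c ^ ((2 : ℝ) / j) }

/-- `γ_j = max {C_1, ..., C_j}`. -/
noncomputable def gammaH (j : ℕ) : ℝ := sSup (hermiteC '' Set.Icc 1 j)

/-- Projection onto the orthogonal complement of the span of a set. -/
noncomputable def projPerp {E : Type*} [NormedAddCommGroup E] [InnerProductSpace ℝ E]
    [FiniteDimensional ℝ E] (S : Set E) (v : E) : E :=
  (Submodule.orthogonalProjectionOnto (Submodule.span ℝ S)ᗮ v : E)

/-- A family `c_0, ..., c_{r-1}` is Korkhine-Zolotarev reduced if for each `i`, the projection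
`c_i(i)` of `c_i` onto the orthogonal complement of `span(c_0, ..., c_{i-1})` is a shortest
nonzero vector of the lattice generated by the projections of the `c_j` onto that complement. -/
def KZReduced {E : Type*} [NormedAddCommGroup E] [InnerProductSpace ℝ E]
    [FiniteDimensional ℝ E] {r : ℕ} (c : Fin r → E) : Prop :=
  ∀ i : Fin r,
    ∀ v ∈ latE (fun j => projPerp (c '' { j : Fin r | j < i }) (c j)),
      v ≠ 0 → ‖projPerp (c '' { j : Fin r | j < i }) (c i)‖ ≤ ‖v‖

/-- A basis `b_0, ..., b_{r-1}` of a lattice is RKZ reduced if its reciprocal basis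
(the unique family `b'` in the span with `⟨b_i, b'_j⟩ = 1` if `i + j = r + 1` (1-indexed)
and `0` otherwise) is Korkhine-Zolotarev reduced. -/
def RKZReduced {E : Type*} [NormedAddCommGroup E] [InnerProductSpace ℝ E]
    [FiniteDimensional ℝ E] {r : ℕ} (b : Fin r → E) : Prop :=
  ∃ b' : Fin r → E,
    (∀ j, b' j ∈ Submodule.span ℝ (Set.range b)) ∧
    (∀ i j : Fin r, (inner ℝ (b i) (b' j) : ℝ) =
      if (i : ℕ) + (j : ℕ) + 1 = r then 1 else 0) ∧
    KZReduced b'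

/-- The Euclidean norm of an integer vector. -/
noncomputable def intNorm {n : ℕ} (v : Fin n → ℤ) : ℝ :=
  Real.sqrt (∑ i, ((v i : ℝ)) ^ 2)


open Matrix in
lemma latDet_eq_abs_det {j : ℕ} (c : Fin j → EuclideanSpace ℝ (Fin j)) :
    latDet c = |(Matrix.of fun i k => c i k).det| := by
  unfold latDet
  have h : (Matrix.of fun i j' : Fin j => (inner ℝ (c i) (c j') : ℝ))
      = (Matrix.of fun i k => c i k) * (Matrix.of fun i k => c i k)ᵀ := by
    ext i j'
    simp [Matrix.mul_apply, PiLp.inner_apply, RCLike.inner_apply, mul_comm]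
  rw [h, Matrix.det_mul, Matrix.det_transpose, ← sq, Real.sqrt_sq_eq_abs]

open Matrix in
lemma hdet_matrix_eq {j : ℕ} (c : Fin j → EuclideanSpace ℝ (Fin j)) :
    ((EuclideanSpace.basisFun (Fin j) ℝ).toBasis).det c = (Matrix.of fun i k => c i k).det := by
  classical
  rw [Module.Basis.det_apply, ← Matrix.det_transpose]
  congr 1

lemma latDet_pos {j : ℕ} (hj : 1 ≤ j) {c : Fin j → EuclideanSpace ℝ (Fin j)}
    (hc : LinearIndependent ℝ c) : 0 < latDet c := by
  haveI : Nonempty (Fin j) := ⟨⟨0, hj⟩⟩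
  have hcard : Fintype.card (Fin j) = Module.finrank ℝ (EuclideanSpace ℝ (Fin j)) := by simp
  let b := basisOfLinearIndependentOfCardEqFinrank hc hcard
  have hb : ⇑b = c := coe_basisOfLinearIndependentOfCardEqFinrank hc hcard
  have h := ((EuclideanSpace.basisFun (Fin j) ℝ).toBasis.isUnit_det b).ne_zero
  rw [hb, hdet_matrix_eq] at h
  rw [latDet_eq_abs_det]
  exact abs_pos.mpr h

open MeasureTheory Submodule Matrix ENNReal in
lemma lambda1_sq_le {j : ℕ} (hj : 1 ≤ j) (c : Fin j → EuclideanSpace ℝ (Fin j))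
    (hc : LinearIndependent ℝ c) :
    lambda1 c ^ 2 ≤ j * latDet c ^ ((2 : ℝ) / j) := by
  classical
  haveI : Nonempty (Fin j) := ⟨⟨0, hj⟩⟩
  have hjR : (0:ℝ) < j := by exact_mod_cast hj
  have hcard : Fintype.card (Fin j) = Module.finrank ℝ (EuclideanSpace ℝ (Fin j)) := by simp
  set b := basisOfLinearIndependentOfCardEqFinrank hc hcard with hbdef
  have hb : ⇑b = c := coe_basisOfLinearIndependentOfCardEqFinrank hc hcard
  set d := latDet c with hd
  have hdpos : 0 < d := latDet_pos hj hc
  -- countability of the lattice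
  haveI hcnt : Countable (span ℤ (Set.range ⇑b)) := by
    have hsurj : Function.Surjective
        (fun p : Fin j → ℤ => (⟨∑ i, p i • b i,
          Submodule.sum_mem _ fun i _ => Submodule.smul_mem _ _
            (Submodule.subset_span (Set.mem_range_self i))⟩ :
          span ℤ (Set.range ⇑b))) := by
      rintro ⟨x, hx⟩
      obtain ⟨p, hp⟩ := (mem_span_range_iff_exists_fun ℤ).mp hx
      exact ⟨p, Subtype.ext hp⟩
    exact hsurj.countable
  haveI : Countable (span ℤ (Set.range ⇑b)).toAddSubgroup := hcnt
  -- volume of the fundamental domain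
  have hF : volume (ZSpan.fundamentalDomain b) = ENNReal.ofReal d := by
    rw [ZSpan.measure_fundamentalDomain b volume ((EuclideanSpace.basisFun (Fin j) ℝ).toBasis)]
    have h1 : volume (ZSpan.fundamentalDomain ((EuclideanSpace.basisFun (Fin j) ℝ).toBasis)) = 1 := by
      rw [measure_congr (ZSpan.fundamentalDomain_ae_parallelepiped _ volume)]
      rw [OrthonormalBasis.coe_toBasis]
      exact (EuclideanSpace.basisFun (Fin j) ℝ).volume_parallelepiped
    rw [h1, mul_one, hb, hdet_matrix_eq, hd, latDet_eq_abs_det]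
  have key : ∀ t : ℝ, d ^ ((1:ℝ)/j) < t → lambda1 c ≤ Real.sqrt j * t := by
    intro t ht
    have htpos : 0 < t := lt_of_le_of_lt (Real.rpow_nonneg hdpos.le _) ht
    set s : Set (EuclideanSpace ℝ (Fin j)) :=
      (MeasurableEquiv.toLp 2 (Fin j → ℝ)).symm ⁻¹' (Set.pi Set.univ fun _ => Set.Icc (-t) t)
      with hs_def
    have hmem : ∀ x : EuclideanSpace ℝ (Fin j), x ∈ s ↔ ∀ k, |x k| ≤ t := by
      intro x
      simp only [hs_def, Set.mem_preimage, Set.mem_pi, Set.mem_univ, forall_true_left,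
        Set.mem_Icc, ← abs_le]
      rfl
    have hvol : volume s = ENNReal.ofReal (2*t) ^ j := by
      rw [hs_def, (EuclideanSpace.volume_preserving_symm_measurableEquiv_toLp (Fin j)).measure_preimage
        (MeasurableSet.univ_pi fun _ => measurableSet_Icc).nullMeasurableSet]
      rw [volume_pi_pi]
      simp [Real.volume_Icc, two_mul]
    have hsymm : ∀ x ∈ s, -x ∈ s := by
      intro x hx
      rw [hmem] at hx ⊢
      intro k
      have : (-x) k = -(x k) := rfl
      rw [this, abs_neg]
      exact hx k
    have hconv : Convex ℝ s := by
      intro x hx y hy a bb ha hbb hab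
      rw [hmem] at hx hy ⊢
      intro k
      have hxy : (a • x + bb • y) k = a * x k + bb * y k := rfl
      rw [hxy]
      calc |a * x k + bb * y k| ≤ |a * x k| + |bb * y k| := abs_add_le _ _
        _ = a * |x k| + bb * |y k| := by rw [abs_mul, abs_mul, abs_of_nonneg ha, abs_of_nonneg hbb]
        _ ≤ a * t + bb * t := by
            gcongr
            · exact hx k
            · exact hy k
        _ = t := by rw [← add_mul, hab, one_mul]
    have hdlt : d < t ^ j := by
      have h1 : (d ^ ((1:ℝ)/j)) ^ j = d := by
        rw [← Real.rpow_natCast (d ^ ((1:ℝ)/j)) j, ← Real.rpow_mul hdpos.le]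
        rw [one_div_mul_cancel (by exact_mod_cast hjR.ne'), Real.rpow_one]
      calc d = (d ^ ((1:ℝ)/j)) ^ j := h1.symm
        _ < t ^ j := by
            apply pow_lt_pow_left₀ ht (Real.rpow_nonneg hdpos.le _)
            omega
    have hlt : volume (ZSpan.fundamentalDomain b) *
        2 ^ Module.finrank ℝ (EuclideanSpace ℝ (Fin j)) < volume s := by
      rw [hF, hvol, finrank_euclideanSpace_fin]
      have h2 : (2:ℝ≥0∞) ^ j = ENNReal.ofReal ((2:ℝ)^j) := by
        rw [ENNReal.ofReal_pow (by norm_num)]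
        norm_num
      rw [h2, ← ENNReal.ofReal_mul hdpos.le, ← ENNReal.ofReal_pow (by positivity)]
      apply ENNReal.ofReal_lt_ofReal_iff (by positivity) |>.mpr
      calc d * 2 ^ j < t ^ j * 2 ^ j := by
            apply mul_lt_mul_of_pos_right hdlt (by positivity)
        _ = (2 * t) ^ j := by rw [mul_pow]; ring
    obtain ⟨x, hx0, hxs⟩ := exists_ne_zero_mem_lattice_of_measure_mul_two_pow_lt_measure
      (ZSpan.isAddFundamentalDomain' b volume) hsymm hconv hlt
    have hxlat : ((x : (span ℤ (Set.range ⇑b)).toAddSubgroup) : EuclideanSpace ℝ (Fin j)) ∈ latE c := by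
      have hlatE : (span ℤ (Set.range ⇑b)).toAddSubgroup = latE c := by
        rw [hb]; exact span_int_eq_addSubgroupClosure _
      rw [← hlatE]
      exact x.2
    have hxne : ((x : (span ℤ (Set.range ⇑b)).toAddSubgroup) : EuclideanSpace ℝ (Fin j)) ≠ 0 := by
      simpa using hx0
    have hnorm : ‖((x : (span ℤ (Set.range ⇑b)).toAddSubgroup) : EuclideanSpace ℝ (Fin j))‖
        ≤ Real.sqrt j * t := by
      set y : EuclideanSpace ℝ (Fin j) := ((x : (span ℤ (Set.range ⇑b)).toAddSubgroup) : EuclideanSpace ℝ (Fin j))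
      rw [EuclideanSpace.norm_eq]
      have hsum : (∑ k, ‖y k‖ ^ 2) ≤ j * t^2 := by
        calc (∑ k, ‖y k‖ ^ 2) ≤ ∑ _k : Fin j, t^2 := by
              apply Finset.sum_le_sum
              intro k _
              have := (hmem y).mp hxs k
              have h2 : ‖y k‖ = |y k| := rfl
              rw [h2]
              nlinarith [abs_nonneg (y k)]
          _ = j * t^2 := by simp [mul_comm]
      calc Real.sqrt (∑ k, ‖y k‖ ^ 2) ≤ Real.sqrt ((j : ℝ) * t^2) := Real.sqrt_le_sqrt hsum
        _ = Real.sqrt j * t := by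
            rw [Real.sqrt_mul (by positivity), Real.sqrt_sq htpos.le]
    calc lambda1 c ≤ ‖((x : (span ℤ (Set.range ⇑b)).toAddSubgroup) : EuclideanSpace ℝ (Fin j))‖ := by
          apply csInf_le
          · exact ⟨0, fun r ⟨v, _, _, hv⟩ => hv ▸ norm_nonneg v⟩
          · exact ⟨_, hxlat, hxne, rfl⟩
      _ ≤ Real.sqrt j * t := hnorm
  -- pass to the limit
  have hsj : (0:ℝ) < Real.sqrt j := Real.sqrt_pos.mpr hjR
  have hfinal : lambda1 c ≤ Real.sqrt j * d ^ ((1:ℝ)/j) := by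
    apply _root_.le_of_forall_pos_le_add
    intro ε hε
    have h := key (d ^ ((1:ℝ)/j) + ε / Real.sqrt j) (by
      have : 0 < ε / Real.sqrt j := by positivity
      linarith)
    calc lambda1 c ≤ Real.sqrt j * (d ^ ((1:ℝ)/j) + ε / Real.sqrt j) := h
      _ = Real.sqrt j * d ^ ((1:ℝ)/j) + ε := by
          rw [mul_add, mul_div_cancel₀ _ hsj.ne']
  have hl0 : 0 ≤ lambda1 c := Real.sInf_nonneg (by rintro r ⟨v, _, _, hv⟩; exact hv ▸ norm_nonneg v)
  calc lambda1 c ^ 2 ≤ (Real.sqrt j * d ^ ((1:ℝ)/j)) ^ 2 := pow_le_pow_left₀ hl0 hfinal 2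
    _ = j * d ^ ((2:ℝ)/j) := by
        rw [mul_pow, Real.sq_sqrt hjR.le]
        congr 1
        rw [← Real.rpow_natCast (d ^ ((1:ℝ)/j)) 2, ← Real.rpow_mul hdpos.le]
        norm_num
        rw [inv_mul_eq_div]

lemma hermiteC_le {j : ℕ} (hj : 1 ≤ j) : hermiteC j ≤ j := by
  apply Real.sSup_le _ (by positivity)
  rintro t ⟨c, hc, rfl⟩
  have hkey := lambda1_sq_le hj c hc
  have hdp : (0:ℝ) < latDet c ^ ((2:ℝ)/j) := Real.rpow_pos_of_pos (latDet_pos hj hc) _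
  rw [div_le_iff₀ hdp]
  exact hkey

lemma gammaH_le_s18 (j : ℕ) : gammaH j ≤ j := by
  apply Real.sSup_le _ (by positivity)
  rintro t ⟨i, ⟨hi1, hij⟩, rfl⟩
  exact (hermiteC_le hi1).trans (by exact_mod_cast hij)

lemma gammaH_zero : gammaH 0 = 0 := by
  unfold gammaH
  rw [Set.Icc_eq_empty (by omega), Set.image_empty, Real.sSup_empty]

lemma one_le_intNorm {n : ℕ} {v : Fin n → ℤ} (hv : v ≠ 0) : 1 ≤ intNorm v := by
  have : ∃ i, v i ≠ 0 := by
    by_contra h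
    push_neg at h
    exact hv (funext h)
  obtain ⟨i, hi⟩ := this
  have h1 : (1:ℝ) ≤ (v i : ℝ)^2 := by
    have : 1 ≤ (v i)^2 := by nlinarith [Int.one_le_abs (by simpa using hi), sq_abs (v i)]
    exact_mod_cast this
  have h2 : (1:ℝ) ≤ ∑ i', ((v i' : ℝ))^2 := by
    refine h1.trans ?_
    exact Finset.single_le_sum (f := fun i' => ((v i' : ℝ))^2) (fun i' _ => sq_nonneg _) (Finset.mem_univ i)
  calc (1:ℝ) = Real.sqrt 1 := by simp
    _ ≤ intNorm v := Real.sqrt_le_sqrt h2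

/-- if `m ≤ n`, `n ≥ 5`, `M > (12 (n-m) ‖w₂ - ℓ₂‖)^{n/m}` and
`χ_{m,n}(M) ≥ 1/2`, then for all but at most a fraction `1/2^n` of the `m × n` integer
matrices with entries in `{1, ..., M}` and linearly independent rows, every nonzero vector of
`L_N(A) = {x ∈ ℤ^n : Ax = 0}` has norm greater than `γ_{n-m} ‖w₂ - ℓ₂‖`. -/
theorem almost_all_nullspace_lattices_long (m n M : ℕ) (hm : 0 < m) (hmn : m ≤ n)
    (hn : 5 ≤ n) (hM : 0 < M)
    (ℓ₂ w₂ : EuclideanSpace ℝ (Fin n))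
    (hMbig : ((12 : ℝ) * ((n : ℝ) - m) * ‖w₂ - ℓ₂‖) ^ ((n : ℝ) / m) < M)
    (G' bad : Set (Matrix (Fin m) (Fin n) ℤ))
    (hG' : G' = { A | (∀ i j, A i j ∈ Finset.Icc (1 : ℤ) M) ∧
      LinearIndependent ℚ (fun i : Fin m => fun j : Fin n => (A i j : ℚ)) })
    (χ : ℝ) (hχ : χ = (G'.ncard : ℝ) / (M : ℝ) ^ (m * n)) (hχhalf : 1 / 2 ≤ χ)
    (hbad : bad = { A ∈ G' | ∃ v : Fin n → ℤ, v ≠ 0 ∧ A.mulVec v = 0 ∧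
      intNorm v ≤ gammaH (n - m) * ‖w₂ - ℓ₂‖ }) :
    (bad.ncard : ℝ) ≤ (G'.ncard : ℝ) / 2 ^ n := by
  classical
  subst hχ
  set D := ‖w₂ - ℓ₂‖ with hD
  have hD0 : (0:ℝ) ≤ D := norm_nonneg _
  by_cases hR1 : gammaH (n - m) * D < 1
  · -- the bad set is empty
    have hbadempty : bad = ∅ := by
      rw [hbad]
      ext A
      simp only [Set.mem_setOf_eq, Set.mem_empty_iff_false, iff_false]
      rintro ⟨-, v, hv0, -, hvnorm⟩
      have := one_le_intNorm hv0
      linarith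
    rw [hbadempty, Set.ncard_empty]
    simp only [Nat.cast_zero]
    positivity
  push_neg at hR1
  have hmltn : m < n := by
    rcases lt_or_eq_of_le hmn with h | h
    · exact h
    · exfalso
      have h0 : n - m = 0 := by omega
      rw [h0, gammaH_zero, zero_mul] at hR1
      linarith
  set j := n - m with hjdef
  have hj1 : 1 ≤ j := by omega
  set γ := gammaH j with hγdef
  have hγle : γ ≤ (j:ℝ) := gammaH_le_s18 j
  set R := γ * D with hRdef
  have hR1' : (1:ℝ) ≤ R := hR1
  have hRpos : (0:ℝ) < R := lt_of_lt_of_le one_pos hR1'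
  have hRle : R ≤ (j:ℝ) * D := mul_le_mul_of_nonneg_right hγle hD0
  set k : ℤ := ⌊R⌋ with hkdef
  have hk1 : (1:ℤ) ≤ k := by
    rw [hkdef, Int.le_floor]
    exact_mod_cast hR1'
  have hkR : (k:ℝ) ≤ R := Int.floor_le R
  -- Finsets
  set boxF : Finset (Matrix (Fin m) (Fin n) ℤ) :=
    Fintype.piFinset fun _ : Fin m => Fintype.piFinset fun _ : Fin n => Finset.Icc (1:ℤ) M
    with hboxF
  have hboxmem : ∀ A : Matrix (Fin m) (Fin n) ℤ,
      A ∈ boxF ↔ ∀ i j', A i j' ∈ Finset.Icc (1:ℤ) M := by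
    intro A
    show @Membership.mem (Fin m → Fin n → ℤ) (Finset (Fin m → Fin n → ℤ)) _
      (Fintype.piFinset fun _ : Fin m => Fintype.piFinset fun _ : Fin n => Finset.Icc (1:ℤ) M) A ↔ _
    refine Fintype.mem_piFinset.trans ?_
    constructor
    · intro h i j'
      have := h i
      rw [Fintype.mem_piFinset] at this
      exact this j'
    · intro h i
      rw [Fintype.mem_piFinset]
      exact h i
  have hG'sub : G' ⊆ ↑boxF := by
    intro A hA
    rw [hG'] at hA
    rw [Finset.mem_coe, hboxmem]
    exact hA.1
  have hG'fin : G'.Finite := Set.Finite.subset boxF.finite_toSet hG'sub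
  set S : Finset (Fin n → ℤ) :=
    (Fintype.piFinset fun _ : Fin n => Finset.Icc (-k) k).erase 0 with hSdef
  set badF : (Fin n → ℤ) → Finset (Matrix (Fin m) (Fin n) ℤ) :=
    fun v => boxF.filter (fun A => Matrix.mulVec A v = 0) with hbadFdef
  have hbadsub : bad ⊆ ↑(S.biUnion badF) := by
    intro A hA
    rw [hbad] at hA
    obtain ⟨hAG, v, hv0, hAv, hvnorm⟩ := hA
    have hvS : v ∈ S := by
      rw [hSdef, Finset.mem_erase]
      refine ⟨hv0, ?_⟩
      rw [Fintype.mem_piFinset]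
      intro i
      rw [Finset.mem_Icc]
      have hsum : ∑ i', ((v i' : ℝ))^2 ≤ R^2 := by
        have h1 : intNorm v ^ 2 ≤ R ^ 2 :=
          pow_le_pow_left₀ (Real.sqrt_nonneg _) hvnorm 2
        calc ∑ i', ((v i' : ℝ))^2 = intNorm v ^ 2 := by
              rw [intNorm, Real.sq_sqrt (Finset.sum_nonneg fun _ _ => sq_nonneg _)]
          _ ≤ R^2 := h1
      have hvi2 : ((v i : ℝ))^2 ≤ R^2 :=
        le_trans (Finset.single_le_sum (f := fun i' => ((v i' : ℝ))^2)
          (fun _ _ => sq_nonneg _) (Finset.mem_univ i)) hsum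
      have habs1 : -R ≤ (v i : ℝ) := by nlinarith
      have habs2 : (v i : ℝ) ≤ R := by nlinarith
      constructor
      · have : (-(v i)) ≤ k := by
          rw [hkdef, Int.le_floor]
          push_cast
          linarith
        omega
      · rw [hkdef, Int.le_floor]
        exact habs2
    rw [Finset.mem_coe, Finset.mem_biUnion]
    refine ⟨v, hvS, ?_⟩
    rw [hbadFdef]
    simp only [Finset.mem_filter]
    refine ⟨?_, hAv⟩
    rw [← Finset.mem_coe]
    exact hG'sub hAG
  -- cardinality of each fiber
  have hbadFcard : ∀ v ∈ S, (badF v).card ≤ (M ^ (n-1)) ^ m := by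
    intro v hvS
    have hv0 : v ≠ 0 := (Finset.mem_erase.mp hvS).1
    obtain ⟨i₀, hi₀⟩ : ∃ i₀, v i₀ ≠ 0 := by
      by_contra h
      push_neg at h
      exact hv0 (funext h)
    set tgt : Finset (Fin m → Fin n → ℤ) :=
      Fintype.piFinset fun _ : Fin m => Fintype.piFinset fun j' : Fin n =>
        if j' = i₀ then ({0} : Finset ℤ) else Finset.Icc (1:ℤ) M with htgt
    have hcardtgt : tgt.card = (M ^ (n-1)) ^ m := by
      rw [htgt, Fintype.card_piFinset]
      have hinner : (Fintype.piFinset fun j' : Fin n =>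
          if j' = i₀ then ({0} : Finset ℤ) else Finset.Icc (1:ℤ) M).card = M ^ (n-1) := by
        rw [Fintype.card_piFinset]
        rw [← Finset.mul_prod_erase _ _ (Finset.mem_univ i₀)]
        rw [if_pos rfl, Finset.card_singleton, one_mul]
        calc ∏ x ∈ Finset.univ.erase i₀,
              (if x = i₀ then ({0}:Finset ℤ) else Finset.Icc (1:ℤ) M).card
            = ∏ _x ∈ Finset.univ.erase i₀, M := by
              refine Finset.prod_congr rfl fun x hx => ?_
              rw [if_neg (Finset.mem_erase.mp hx).1, Int.card_Icc]
              simp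
          _ = M ^ (n-1) := by
              rw [Finset.prod_const, Finset.card_erase_of_mem (Finset.mem_univ i₀),
                Finset.card_univ, Fintype.card_fin]
      calc ∏ _i : Fin m, (Fintype.piFinset fun j' : Fin n =>
            if j' = i₀ then ({0} : Finset ℤ) else Finset.Icc (1:ℤ) M).card
          = ∏ _i : Fin m, M ^ (n-1) := by
            exact Finset.prod_congr rfl fun i _ => hinner
        _ = (M ^ (n-1)) ^ m := by
            rw [Finset.prod_const, Finset.card_univ, Fintype.card_fin]
    rw [← hcardtgt]
    apply Finset.card_le_card_of_injOn (fun A i j' => if j' = i₀ then 0 else A i j')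
    · intro A hA
      simp only [Finset.mem_coe, hbadFdef, Finset.mem_filter] at hA
      obtain ⟨hAbox, hAv⟩ := hA
      rw [Finset.mem_coe, htgt, Fintype.mem_piFinset]
      intro i
      rw [Fintype.mem_piFinset]
      intro j'
      by_cases hji : j' = i₀
      · simp [hji]
      · simp only [if_neg hji]
        rw [hboxmem] at hAbox
        exact hAbox i j'
    · intro A hA A' hA' hEq
      simp only [Finset.mem_coe] at hA hA'
      rw [hbadFdef] at hA hA'
      simp only [Finset.mem_filter] at hA hA'
      have hEq' : ∀ i j', (if j' = i₀ then 0 else A i j') = (if j' = i₀ then 0 else A' i j') :=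
        fun i j' => congr_fun (congr_fun hEq i) j'
      have hrow : ∀ B : Matrix (Fin m) (Fin n) ℤ, Matrix.mulVec B v = 0 →
          ∀ i, ∑ j', B i j' * v j' = 0 := by
        intro B hB i
        have := congr_fun hB i
        simpa [Matrix.mulVec, dotProduct] using this
      funext i j'
      by_cases hji : j' = i₀
      · subst hji
        have hne : ∀ j'' , j'' ≠ j' → A i j'' = A' i j'' := by
          intro j'' hj''
          have := hEq' i j''
          simpa [if_neg hj''] using this
        have h1 := hrow A hA.2 i
        have h2 := hrow A' hA'.2 i
        rw [← Finset.add_sum_erase _ _ (Finset.mem_univ j')] at h1 h2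
        have hsum_eq : ∑ x ∈ Finset.univ.erase j', A i x * v x
            = ∑ x ∈ Finset.univ.erase j', A' i x * v x :=
          Finset.sum_congr rfl fun x hx => by rw [hne x (Finset.mem_erase.mp hx).1]
        have hmul : A i j' * v j' = A' i j' * v j' := by
          rw [hsum_eq] at h1
          linarith
        exact mul_right_cancel₀ hi₀ hmul
      · have := hEq' i j'
        simpa [if_neg hji] using this
  -- global counting
  have hcard1 : (bad.ncard : ℝ) ≤ ((S.biUnion badF).card : ℝ) := by
    have h := Set.ncard_le_ncard hbadsub (Finset.finite_toSet _)
    rw [Set.ncard_coe_finset] at h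
    exact_mod_cast h
  have hcard2 : (S.biUnion badF).card ≤ S.card * (M ^ (n-1)) ^ m := by
    calc (S.biUnion badF).card ≤ ∑ v ∈ S, (badF v).card := Finset.card_biUnion_le
      _ ≤ ∑ _v ∈ S, (M ^ (n-1)) ^ m := Finset.sum_le_sum hbadFcard
      _ = S.card * (M ^ (n-1)) ^ m := by rw [Finset.sum_const, smul_eq_mul]
  have hScard : (S.card : ℝ) ≤ (3*R)^n := by
    have h1 : S.card ≤ ((2*k+1).toNat)^n := by
      calc S.card ≤ (Fintype.piFinset fun _ : Fin n => Finset.Icc (-k) k).card := by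
            rw [hSdef]
            exact Finset.card_erase_le
        _ = ((2*k+1).toNat)^n := by
            rw [Fintype.card_piFinset]
            have hic : (Finset.Icc (-k) k).card = (2*k+1).toNat := by
              rw [Int.card_Icc]
              congr 1
              ring
            calc ∏ _x : Fin n, (Finset.Icc (-k) k).card
                = ∏ _x : Fin n, (2*k+1).toNat := Finset.prod_congr rfl fun _ _ => hic
              _ = ((2*k+1).toNat)^n := by
                  rw [Finset.prod_const, Finset.card_univ, Fintype.card_fin]
    have hnn : (0:ℤ) ≤ 2*k+1 := by omega
    have h2 : (((2*k+1).toNat : ℕ) : ℝ) ≤ 3*R := by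
      have hcast : (((2*k+1).toNat : ℕ) : ℝ) = 2*(k:ℝ)+1 := by
        rw [← Int.cast_natCast, Int.toNat_of_nonneg hnn]
        push_cast
        ring
      rw [hcast]
      linarith
    calc (S.card : ℝ) ≤ ((((2*k+1).toNat)^n : ℕ) : ℝ) := by exact_mod_cast h1
      _ = (((2*k+1).toNat : ℕ) : ℝ)^n := by push_cast; ring
      _ ≤ (3*R)^n := pow_le_pow_left₀ (by positivity) h2 n
  have hMm : ((12:ℝ) * j * D)^n ≤ (M:ℝ)^m := by
    have h0 : (0:ℝ) ≤ 12 * (j:ℝ) * D := by positivity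
    have hcast : ((n:ℝ) - (m:ℝ)) = (j:ℝ) := by
      rw [hjdef]
      rw [Nat.cast_sub hmn]
    have h1 : ((12:ℝ) * (j:ℝ) * D) ^ ((n:ℝ)/(m:ℝ)) ≤ (M:ℝ) := by
      rw [← hcast]
      exact hMbig.le
    calc ((12:ℝ)*(j:ℝ)*D)^n = (((12:ℝ)*(j:ℝ)*D) ^ ((n:ℝ)/(m:ℝ)))^m := by
          rw [← Real.rpow_natCast (((12:ℝ)*(j:ℝ)*D) ^ ((n:ℝ)/(m:ℝ))) m, ← Real.rpow_mul h0]
          rw [div_mul_cancel₀ _ (by exact_mod_cast hm.ne' : ((m:ℝ) ≠ 0))]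
          rw [Real.rpow_natCast]
      _ ≤ (M:ℝ)^m := pow_le_pow_left₀ (Real.rpow_nonneg h0 _) h1 m
  have hkey : (3*R)^n * 2^(n+1) ≤ (M:ℝ)^m := by
    have h3R : (0:ℝ) ≤ 3*R := by linarith
    have hstep1 : (3*R)^n * 2^(n+1) ≤ (3*((j:ℝ)*D))^n * 2^(n+1) := by
      apply mul_le_mul_of_nonneg_right _ (by positivity)
      exact pow_le_pow_left₀ h3R (by linarith) n
    have hstep2 : (3*((j:ℝ)*D))^n * 2^(n+1) ≤ ((12:ℝ)*(j:ℝ)*D)^n := by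
      have hEq : ((12:ℝ)*(j:ℝ)*D)^n = (3*((j:ℝ)*D))^n * 4^n := by
        rw [← mul_pow]
        congr 1
        ring
      rw [hEq]
      apply mul_le_mul_of_nonneg_left _ (by positivity)
      have h4 : (4:ℝ)^n = 2^(2*n) := by
        rw [show (4:ℝ) = 2^2 by norm_num, ← pow_mul]
      rw [h4]
      apply pow_le_pow_right₀ (by norm_num)
      omega
    exact le_trans (le_trans hstep1 hstep2) hMm
  have hMpos : (0:ℝ) < (M:ℝ)^(m*n) := by positivity
  rw [le_div_iff₀ hMpos] at hχhalf
  have hMsplit : (M:ℝ)^(m*n) = (M:ℝ)^m * (M:ℝ)^(m*(n-1)) := by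
    rw [← pow_add]
    congr 1
    have hn' : n = 1 + (n-1) := by omega
    nth_rewrite 1 [hn']
    ring
  have h2pos : (0:ℝ) < 2^(n+1) := by positivity
  calc (bad.ncard : ℝ) ≤ ((S.biUnion badF).card : ℝ) := hcard1
    _ ≤ (S.card : ℝ) * (M:ℝ)^(m*(n-1)) := by
        have : ((S.biUnion badF).card : ℝ) ≤ ((S.card * (M ^ (n-1)) ^ m : ℕ) : ℝ) := by
          exact_mod_cast hcard2
        refine this.trans ?_
        push_cast
        rw [← pow_mul, Nat.mul_comm (n-1) m]
    _ ≤ (3*R)^n * (M:ℝ)^(m*(n-1)) :=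
        mul_le_mul_of_nonneg_right hScard (by positivity)
    _ ≤ ((M:ℝ)^m / 2^(n+1)) * (M:ℝ)^(m*(n-1)) := by
        apply mul_le_mul_of_nonneg_right _ (by positivity)
        rw [le_div_iff₀ h2pos]
        exact hkey
    _ = (M:ℝ)^(m*n) / 2^(n+1) := by rw [hMsplit]; ring
    _ ≤ (G'.ncard : ℝ) / 2 ^ n := by
        rw [div_le_div_iff₀ h2pos (by positivity)]
        have hp : (0:ℝ) < 2^n := by positivity
        have := mul_le_mul_of_nonneg_right hχhalf hp.le
        calc (M:ℝ)^(m*n) * 2^n = (1/2 * (M:ℝ)^(m*n)) * (2^n * 2) := by ring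
          _ ≤ (G'.ncard : ℝ) * (2^n * 2) := by nlinarith
          _ = (G'.ncard : ℝ) * 2^(n+1) := by rw [pow_succ]
end

section
/- Hermite's constants satisfy γ_n := max{C_1, ..., C_n} ≤ 1 + n/4, where C_j = sup { λ_1(L)² / (det L)^{2/j} : L a lattice of rank j } and λ_1(L) is the Euclidean length of a shortest nonzero vector of L. -/
open MeasureTheory Matrix
open scoped ENNReal NNReal

private lemma hB19.exp_taylor_up {u : ℝ} (h0 : 0 ≤ u) (h1 : u ≤ 1) :
    Real.exp u ≤ 1 + u + u^2/2 + u^3*(2/9) := by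
  have h := Real.exp_bound (x := u) (by rwa [abs_of_nonneg h0]) (n := 3) (by norm_num)
  have hs : ∑ i ∈ Finset.range 3, u ^ i / (Nat.factorial i) = 1 + u + u^2/2 := by
    simp [Finset.sum_range_succ, Nat.factorial]
  rw [hs, abs_of_nonneg h0] at h
  have h2 := (abs_sub_le_iff.mp h).1
  have h4 : u ^ 3 * (↑(Nat.succ 3) / ((Nat.factorial 3 :ℝ) * (3:ℕ))) = u^3 * (2/9) := by
    norm_num [Nat.factorial]
  rw [h4] at h2
  linarith

private lemma hB19.exp_sub_sq_le {u : ℝ} (h0 : 0 ≤ u) (h1 : u ≤ 1) :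
    Real.exp (u - u^2/2) ≤ 1 + u := by
  have he : Real.exp u ≤ (1 + u) * Real.exp (u^2/2) := by
    have h2 : (1:ℝ) + u^2/2 ≤ Real.exp (u^2/2) := by
      have := Real.add_one_le_exp (u^2/2); linarith
    have h3 : (1 + u) * (1 + u^2/2) ≤ (1 + u) * Real.exp (u^2/2) :=
      mul_le_mul_of_nonneg_left h2 (by linarith)
    have h4 : Real.exp u ≤ (1+u)*(1+u^2/2) := by
      have := hB19.exp_taylor_up h0 h1
      nlinarith [pow_nonneg h0 3]
    linarith
  rw [Real.exp_sub]
  rw [div_le_iff₀ (Real.exp_pos _)]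
  exact he

private lemma hB19.taylor4_le_exp {t : ℝ} (h : 0 ≤ t) :
    1 + t + t^2/2 + t^3/6 + t^4/24 ≤ Real.exp t := by
  have := Real.sum_le_exp_of_nonneg h 5
  have hs : ∑ i ∈ Finset.range 5, t ^ i / (Nat.factorial i) = 1 + t + t^2/2 + t^3/6 + t^4/24 := by
    simp [Finset.sum_range_succ, Nat.factorial]
  rwa [hs] at this

private lemma hB19.key_poly {x : ℝ} (hx : 1 ≤ x) :
    1536*(x+2)^2*(x+4)^8 ≤ (986/100) * (x+6)^2 *
      (24*(x+4)^8 + 24*(2*x*(x+3))*(x+4)^6 + 12*(2*x*(x+3))^2*(x+4)^4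
        + 4*(2*x*(x+3))^3*(x+4)^2 + (2*x*(x+3))^4) := by
  have hy : (0:ℝ) ≤ x - 1 := by linarith
  nlinarith [pow_nonneg hy 2, pow_nonneg hy 3, pow_nonneg hy 4, pow_nonneg hy 5,
    pow_nonneg hy 6, pow_nonneg hy 7, pow_nonneg hy 8, pow_nonneg hy 9, pow_nonneg hy 10, hy]

open Real in
private lemma hB19.key_ineq (j : ℕ) (hj : 1 ≤ j) :
    64*((j:ℝ)+2)^2 ≤ π^2*((j:ℝ)+6)^2 * (((j:ℝ)+6)/((j:ℝ)+4))^j := by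
  set x : ℝ := (j:ℝ) with hxdef
  have hx : 1 ≤ x := by rw [hxdef]; exact_mod_cast hj
  have hx4 : (0:ℝ) < x + 4 := by linarith
  set u : ℝ := 2/(x+4) with hudef
  have hu0 : 0 ≤ u := by positivity
  have hu1 : u ≤ 1 := by rw [hudef, div_le_one hx4]; linarith
  have h1 : (x+6)/(x+4) = 1 + u := by rw [hudef]; field_simp; ring
  set t : ℝ := x*(u - u^2/2) with htdef
  have ht0 : 0 ≤ t := by
    have : 0 ≤ u - u^2/2 := by nlinarith
    positivity
  have h2 : Real.exp t ≤ (1+u)^j := by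
    have : Real.exp t = (Real.exp (u - u^2/2))^j := by
      rw [htdef, hxdef, ← Real.exp_nat_mul]
    rw [this]
    exact pow_le_pow_left₀ (Real.exp_nonneg _) (hB19.exp_sub_sq_le hu0 hu1) j
  have ht : t = 2*x*(x+3)/(x+4)^2 := by
    rw [htdef, hudef]; field_simp; ring
  have hQ : 1 + t + t^2/2 + t^3/6 + t^4/24 =
      (24*(x+4)^8 + 24*(2*x*(x+3))*(x+4)^6 + 12*(2*x*(x+3))^2*(x+4)^4
        + 4*(2*x*(x+3))^3*(x+4)^2 + (2*x*(x+3))^4) / (24*(x+4)^8) := by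
    rw [ht]; field_simp; ring
  have hpi : (986/100 : ℝ) ≤ π^2 := by nlinarith [Real.pi_gt_d6]
  have hQ0 : (0:ℝ) < 24*(x+4)^8 := by positivity
  calc 64*(x+2)^2
      ≤ (986/100) * ((x+6)^2 *
      ((24*(x+4)^8 + 24*(2*x*(x+3))*(x+4)^6 + 12*(2*x*(x+3))^2*(x+4)^4
        + 4*(2*x*(x+3))^3*(x+4)^2 + (2*x*(x+3))^4) / (24*(x+4)^8))) := by
        rw [← mul_div_assoc, ← mul_div_assoc, le_div_iff₀ hQ0]
        nlinarith [hB19.key_poly hx]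
    _ ≤ π^2 * ((x+6)^2 * (1 + t + t^2/2 + t^3/6 + t^4/24)) := by
        rw [hQ]
        apply mul_le_mul hpi le_rfl _ (sq_nonneg π)
        positivity
    _ ≤ π^2 * ((x+6)^2 * Real.exp t) := by
        have h4 := hB19.taylor4_le_exp ht0
        gcongr
    _ ≤ π^2 * ((x+6)^2 * (1+u)^j) := by
        gcongr
    _ = π^2*(x+6)^2 * ((x+6)/(x+4))^j := by rw [h1, mul_assoc]

open Real in
private lemma hB19.gamma_ineq :
    ∀ j : ℕ, 1 ≤ j → Real.Gamma ((j:ℝ)/2+1)^2 * 16^j ≤ (π*((j:ℝ)+4))^j := by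
  intro j
  induction j using Nat.strong_induction_on with
  | _ j ih =>
    match j with
    | 0 => intro h; exact absurd h (by norm_num)
    | 1 =>
      intro _
      have h1 : Real.Gamma ((1:ℝ)/2+1) = Real.sqrt π / 2 := by
        rw [Real.Gamma_add_one (by norm_num), Real.Gamma_one_half_eq]; ring
      push_cast
      rw [h1]
      rw [div_pow, Real.sq_sqrt Real.pi_pos.le]
      rw [pow_one]
      nlinarith [Real.pi_pos]
    | 2 =>
      intro _
      have h1 : ((2:ℕ):ℝ)/2+1 = 2 := by norm_num
      rw [h1, Real.Gamma_two]
      have hpi : (986/100 : ℝ) ≤ π^2 := by nlinarith [Real.pi_gt_d6]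
      push_cast
      nlinarith [Real.pi_pos]
    | (k+3) =>
      intro _
      have hk1 : 1 ≤ k+1 := by omega
      have IH := ih (k+1) (by omega) hk1
      have K := hB19.key_ineq (k+1) hk1
      set x : ℝ := ((k+1:ℕ):ℝ) with hxdef
      have hx0 : 0 ≤ x := by positivity
      have hcast : ((k+3:ℕ):ℝ) = x + 2 := by rw [hxdef]; push_cast; ring
      have hG : Real.Gamma (((k+3:ℕ):ℝ)/2+1) = (x/2+1) * Real.Gamma (x/2+1) := by
        rw [hcast]
        have : (x+2)/2 + 1 = (x/2+1) + 1 := by ring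
        rw [this, Real.Gamma_add_one (by positivity)]
      have hGpos : 0 < Real.Gamma (x/2+1) := Real.Gamma_pos_of_pos (by positivity)
      have hx4 : (0:ℝ) < x + 4 := by linarith
      have hge : (0:ℝ) ≤ (π*(x+4))^(k+1) := by positivity
      rw [hG, hcast]
      have step1 : ((x/2+1) * Real.Gamma (x/2+1))^2 * 16^(k+3)
          = (64*(x+2)^2) * (Real.Gamma (x/2+1)^2 * 16^(k+1)) := by ring
      rw [step1]
      calc (64*(x+2)^2) * (Real.Gamma (x/2+1)^2 * 16^(k+1))
          ≤ (64*(x+2)^2) * (π*(x+4))^(k+1) := by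
            apply mul_le_mul_of_nonneg_left IH (by positivity)
        _ ≤ (π^2*(x+6)^2 * ((x+6)/(x+4))^(k+1)) * (π*(x+4))^(k+1) := by
            apply mul_le_mul_of_nonneg_right K hge
        _ = π^2*(x+6)^2 * (((x+6)/(x+4)) * (π*(x+4)))^(k+1) := by
            rw [mul_assoc, ← mul_pow, ← mul_pow]
        _ = π^2*(x+6)^2 * (π*(x+6))^(k+1) := by
            have hmul : ((x+6)/(x+4)) * (π*(x+4)) = π*(x+6) := by field_simp
            rw [hmul]
        _ = (π*(x+2+4))^(k+3) := by
            have : x+2+4 = x+6 := by ring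
            rw [this, pow_succ, pow_succ]
            ring

open Real in
private theorem hB19.main_bound (j : ℕ) (hj : 1 ≤ j) (c : Fin j → EuclideanSpace ℝ (Fin j))
    (hc : LinearIndependent ℝ c) :
    lambda1 c ^ 2 / latDet c ^ ((2 : ℝ) / j) ≤ 1 + (j : ℝ) / 4 := by
  haveI : Nonempty (Fin j) := ⟨⟨0, hj⟩⟩
  have hjR : (1:ℝ) ≤ (j:ℝ) := by exact_mod_cast hj
  have hcard : Fintype.card (Fin j) = Module.finrank ℝ (EuclideanSpace ℝ (Fin j)) := by
    simp [finrank_euclideanSpace]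
  set b : Module.Basis (Fin j) ℝ (EuclideanSpace ℝ (Fin j)) :=
    basisOfLinearIndependentOfCardEqFinrank hc hcard with hbdef
  have hb : ⇑b = c := coe_basisOfLinearIndependentOfCardEqFinrank hc hcard
  have hlat : latE c = (Submodule.span ℤ (Set.range ⇑b)).toAddSubgroup := by
    rw [hb, latE, Submodule.span_int_eq_addSubgroupClosure]
  have fund : IsAddFundamentalDomain (latE c) (ZSpan.fundamentalDomain b) volume := by
    rw [hlat]; exact ZSpan.isAddFundamentalDomain' b volume
  set f := WithLp.linearEquiv 2 ℝ (Fin j → ℝ) with hfdef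
  set b' : Module.Basis (Fin j) ℝ (Fin j → ℝ) := b.map f with hb'def
  set e := (MeasurableEquiv.toLp 2 (Fin j → ℝ)).symm with hedef
  set M : Matrix (Fin j) (Fin j) ℝ := Matrix.of fun i k => c i k with hMdef
  have hrows : LinearIndependent ℝ (fun i => M i) := by
    have := hc.map' f.toLinearMap f.ker
    exact this
  have hdet : M.det ≠ 0 := by
    have hU : IsUnit M := Matrix.linearIndependent_rows_iff_isUnit.mp hrows
    exact ((Matrix.isUnit_iff_isUnit_det M).mp hU).ne_zero
  set D : ℝ := |M.det| with hDdef
  have hD0 : 0 < D := abs_pos.mpr hdet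
  have hvol : volume (ZSpan.fundamentalDomain b) = ENNReal.ofReal D := by
    have h1 : ZSpan.fundamentalDomain b' = ⇑e '' (ZSpan.fundamentalDomain b) := by
      rw [← ZSpan.map_fundamentalDomain b f]; rfl
    have h2 : ⇑e '' (ZSpan.fundamentalDomain b) = ⇑e.symm ⁻¹' (ZSpan.fundamentalDomain b) :=
      MeasurableEquiv.image_eq_preimage_symm e _
    have h3 := ((EuclideanSpace.volume_preserving_symm_measurableEquiv_toLp (Fin j)).symm e).measure_preimage
      (ZSpan.fundamentalDomain_measurableSet b).nullMeasurableSet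
    have h4 : volume (ZSpan.fundamentalDomain b') = volume (ZSpan.fundamentalDomain b) := by
      rw [h1, h2, h3]
    rw [← h4, ZSpan.volume_fundamentalDomain b']
    have h5 : Matrix.of ⇑b' = M := by
      ext i k
      simp only [hb'def, hMdef, Module.Basis.map_apply, Matrix.of_apply, hb]
      rfl
    rw [h5]
  have hGram : Matrix.of (fun i k : Fin j => (inner ℝ (c i) (c k) : ℝ)) = M * Mᵀ := by
    ext i k
    simp [Matrix.mul_apply, hMdef, PiLp.inner_apply]
    exact Finset.sum_congr rfl (fun _ _ => mul_comm _ _)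
  have hlatdet : latDet c = D := by
    rw [latDet, hGram, Matrix.det_mul, Matrix.det_transpose, Real.sqrt_mul_self_eq_abs]
  have hG0 : 0 < Real.Gamma ((j:ℝ)/2+1) := Real.Gamma_pos_of_pos (by positivity)
  set w : ℝ := Real.sqrt π ^ j / Real.Gamma ((j:ℝ)/2+1) with hwdef
  have hw0 : 0 < w := by
    apply div_pos (pow_pos (Real.sqrt_pos.mpr Real.pi_pos) j) hG0
  set r : ℝ := 2 * (D/w) ^ ((1:ℝ)/j) with hrdef
  have hDw0 : 0 < D/w := div_pos hD0 hw0
  have hr0 : 0 < r := by positivity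
  have hjne : ((j:ℝ)) ≠ 0 := by positivity
  have hrj : r^j = 2^j * (D/w) := by
    rw [hrdef, mul_pow, ← Real.rpow_natCast ((D/w) ^ ((1:ℝ)/(j:ℝ))) j,
      ← Real.rpow_mul hDw0.le, one_div, inv_mul_cancel₀ hjne, Real.rpow_one]
  haveI hdisc : DiscreteTopology (latE c) := by rw [hlat]; infer_instance
  haveI hcnt : Countable (latE c) := by
    rw [hlat]
    exact inferInstanceAs (Countable (Submodule.span ℤ (Set.range ⇑b)))
  haveI : Nontrivial (EuclideanSpace ℝ (Fin j)) := by infer_instance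
  have hcond : volume (ZSpan.fundamentalDomain b) *
      2 ^ (Module.finrank ℝ (EuclideanSpace ℝ (Fin j)))
      ≤ volume (Metric.closedBall (0 : EuclideanSpace ℝ (Fin j)) r) := by
    rw [hvol, finrank_euclideanSpace, Fintype.card_fin,
      EuclideanSpace.volume_closedBall, Fintype.card_fin]
    have h2j : ((2:ℝ≥0∞))^j = ENNReal.ofReal ((2:ℝ)^j) := by
      rw [ENNReal.ofReal_pow (by norm_num)]
      norm_num
    rw [h2j, ← ENNReal.ofReal_pow hr0.le, hrj,
      ← ENNReal.ofReal_mul hD0.le, ← ENNReal.ofReal_mul (by positivity)]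
    apply le_of_eq
    congr 1
    rw [mul_assoc, div_mul_cancel₀ _ (ne_of_gt hw0)]
    ring
  obtain ⟨x, hx0, hxmem⟩ := exists_ne_zero_mem_lattice_of_measure_mul_two_pow_le_measure
    fund (fun y hy => by simpa using hy) (convex_closedBall _ _)
    (isCompact_closedBall _ _) hcond
  have hbdd : BddBelow { t | ∃ v ∈ latE c, v ≠ 0 ∧ ‖v‖ = t } :=
    ⟨0, fun t ht => by obtain ⟨v, _, _, hv⟩ := ht; rw [← hv]; exact norm_nonneg v⟩
  have hxne : ((x : latE c) : EuclideanSpace ℝ (Fin j)) ≠ 0 := by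
    simpa using hx0
  have hmem : ‖((x : latE c) : EuclideanSpace ℝ (Fin j))‖ ∈
      { t | ∃ v ∈ latE c, v ≠ 0 ∧ ‖v‖ = t } :=
    ⟨_, (x : latE c).2, hxne, rfl⟩
  have hl1r : lambda1 c ≤ r :=
    le_trans (csInf_le hbdd hmem) (mem_closedBall_zero_iff.mp hxmem)
  have hl10 : 0 ≤ lambda1 c :=
    Real.sInf_nonneg (fun t ht => by obtain ⟨v, _, _, hv⟩ := ht; rw [← hv]; exact norm_nonneg v)
  have hsq : lambda1 c ^ 2 ≤ 4 * (D/w) ^ ((2:ℝ)/(j:ℝ)) := by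
    have h1 : lambda1 c ^ 2 ≤ r ^ 2 := pow_le_pow_left₀ hl10 hl1r 2
    have h2 : r ^ 2 = 4 * (D/w) ^ ((2:ℝ)/(j:ℝ)) := by
      have hexp : ((D/w) ^ ((1:ℝ)/(j:ℝ)))^(2:ℕ) = (D/w) ^ ((2:ℝ)/(j:ℝ)) := by
        rw [← Real.rpow_natCast ((D/w) ^ ((1:ℝ)/(j:ℝ))) 2, ← Real.rpow_mul hDw0.le]
        norm_num
        rw [inv_mul_eq_div]
      rw [hrdef, mul_pow, hexp]
      norm_num
    linarith
  have hsplit : (D/w) ^ ((2:ℝ)/(j:ℝ)) = D ^ ((2:ℝ)/(j:ℝ)) / w ^ ((2:ℝ)/(j:ℝ)) :=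
    Real.div_rpow hD0.le hw0.le _
  have hDr0 : 0 < D ^ ((2:ℝ)/(j:ℝ)) := Real.rpow_pos_of_pos hD0 _
  have hwr0 : 0 < w ^ ((2:ℝ)/(j:ℝ)) := Real.rpow_pos_of_pos hw0 _
  have hstep : lambda1 c ^ 2 / D ^ ((2:ℝ)/(j:ℝ)) ≤ 4 / w ^ ((2:ℝ)/(j:ℝ)) := by
    rw [div_le_div_iff₀ hDr0 (by positivity)]
    calc lambda1 c ^ 2 * w ^ ((2:ℝ)/(j:ℝ))
        ≤ (4 * (D/w) ^ ((2:ℝ)/(j:ℝ))) * w ^ ((2:ℝ)/(j:ℝ)) := by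
          apply mul_le_mul_of_nonneg_right hsq hwr0.le
      _ = 4 * D ^ ((2:ℝ)/(j:ℝ)) := by
          rw [hsplit]; field_simp
  have hfinal : 4 / w ^ ((2:ℝ)/(j:ℝ)) ≤ 1 + (j:ℝ)/4 := by
    have hkey : (16:ℝ)^j ≤ (((j:ℝ)+4) * w ^ ((2:ℝ)/(j:ℝ)))^j := by
      have hwn : (w ^ ((2:ℝ)/(j:ℝ)))^j = w^2 := by
        rw [← Real.rpow_natCast (w ^ ((2:ℝ)/(j:ℝ))) j, ← Real.rpow_mul hw0.le,
          div_mul_cancel₀ _ hjne, Real.rpow_two]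
      rw [mul_pow, hwn]
      have hw2 : w^2 = π^j / Real.Gamma ((j:ℝ)/2+1)^2 := by
        rw [hwdef, div_pow, ← pow_mul, mul_comm j 2, pow_mul, Real.sq_sqrt Real.pi_pos.le]
      rw [hw2]
      have hre : ((j:ℝ)+4)^j * (π^j / Real.Gamma ((j:ℝ)/2+1)^2)
          = (π*((j:ℝ)+4))^j / Real.Gamma ((j:ℝ)/2+1)^2 := by
        rw [mul_pow]; ring
      rw [hre, le_div_iff₀ (by positivity)]
      calc (16:ℝ)^j * Real.Gamma ((j:ℝ)/2+1)^2 = Real.Gamma ((j:ℝ)/2+1)^2 * 16^j := by ring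
        _ ≤ (π*((j:ℝ)+4))^j := hB19.gamma_ineq j hj
    have h16 : (16:ℝ) ≤ ((j:ℝ)+4) * w ^ ((2:ℝ)/(j:ℝ)) :=
      le_of_pow_le_pow_left₀ (by omega) (by positivity) hkey
    rw [div_le_iff₀ hwr0]
    nlinarith [hwr0]
  rw [hlatdet]
  linarith [hstep.trans hfinal]

/-- Hermite's constants satisfy `γ_n = max {C_1, ..., C_n} ≤ 1 + n/4`. -/
theorem gammaH_le (n : ℕ) : gammaH n ≤ 1 + (n : ℝ) / 4 := by
  apply Real.sSup_le _ (by positivity)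
  rintro t ⟨j, hj, rfl⟩
  apply Real.sSup_le _ (by positivity)
  rintro t ⟨c, hc, rfl⟩
  have h1 := hB19.main_bound j hj.1 c hc
  have h2 : (j:ℝ) ≤ (n:ℝ) := by exact_mod_cast hj.2
  linarith
end
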